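/- Let 𝔎 be a finite ring and M = (X^(n)) an irreducible (finite-state, homogeneous) Markov chain whose state space is 𝔎, with transition matrix P and invariant distribution π = [p_j]_{j∈𝔎}. For any η > 0 there exist ε₀ > 0 and N₀ ∈ ℕ⁺ such that for all 0 < ε < ε₀, all n > N₀, every x ∈ S_ε(n,P) and every left ideal 𝔍 of 𝔎, the set S_ε(x,𝔍) = { y ∈ S_ε(n,P) : y − x ∈ 𝔍^n } satisfies |S_ε(x,𝔍)| < exp₂{ n [ ∑_{A ∈ 𝔎/𝔍} (∑_{j∈A} p_j) · H(S_A | π_A) + η ] }. -/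

import Mathlib

open Finset

/-- `N(i,j;x)`: number of occurrences of the consecutive pair `[i, j]` in the sequence `x`. -/
noncomputable def pairCount {X : Type*} [DecidableEq X] (x : List X) (i j : X) : ℕ :=
  (x.zip x.tail).count (i, j)

/-- `N(i;x) = ∑_j N(i,j;x)`. -/
noncomputable def stateCount {X : Type*} [Fintype X] [DecidableEq X] (x : List X) (i : X) : ℕ :=
  ∑ j, pairCount x i j

/-- `x` is strongly Markov ε-typical with respect to the stochastic matrix `Q`
whose invariant distribution is `q`. -/
def SMTypical {X : Type*} [Fintype X] [DecidableEq X]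
    (Q : X → X → ℝ) (q : X → ℝ) (ε : ℝ) (x : List X) : Prop :=
  ∀ i j : X,
    |(pairCount x i j : ℝ) / (stateCount x i : ℝ) - Q i j| < ε ∧
    |(stateCount x i : ℝ) / (x.length : ℝ) - q i| < ε

/-- `P` is a stochastic matrix. -/
def IsStochasticMat {X : Type*} [Fintype X] (P : X → X → ℝ) : Prop :=
  (∀ i j, 0 ≤ P i j) ∧ ∀ i, ∑ j, P i j = 1

/-- `P` is irreducible: there is no nonempty `A ⊊ X` with `P_{A,Aᶜ} = 0`. -/
def IsIrreducibleMat {X : Type*} [Fintype X] (P : X → X → ℝ) : Prop :=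
  ∀ A : Finset X, A.Nonempty → A ≠ Finset.univ → ∃ i ∈ A, ∃ j ∉ A, P i j ≠ 0

/-- `π` is an invariant (stationary) distribution of `P`. -/
def IsInvariantDist {X : Type*} [Fintype X] (P : X → X → ℝ) (π : X → ℝ) : Prop :=
  (∀ i, 0 ≤ π i) ∧ ∑ i, π i = 1 ∧ ∀ j, ∑ i, π i * P i j = π j

/-- Probability that the stationary Markov chain with initial (invariant) distribution `π`
and transition matrix `P` emits the finite path `x`. -/
noncomputable def pathProb {X : Type*} (π : X → ℝ) (P : X → X → ℝ) (x : List X) : ℝ :=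
  (x.head?.elim 1 π) * ((x.zip x.tail).map fun p => P p.1 p.2).prod

/-- `H(P|π) = -∑_{i,j} π_i P_{ij} log₂ P_{ij}`. -/
noncomputable def mcCondEnt {X : Type*} [Fintype X] (P : X → X → ℝ) (π : X → ℝ) : ℝ :=
  -∑ i, ∑ j, π i * P i j * Real.logb 2 (P i j)

/-- The stochastic complement `S_A = P_{A,A} + P_{A,Aᶜ} (1 - P_{Aᶜ,Aᶜ})⁻¹ P_{Aᶜ,A}`
of `P_{A,A}` in `P`. -/
noncomputable def stochComp {X : Type*} [Fintype X] [DecidableEq X]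
    (P : X → X → ℝ) (A : Finset X) :
    {i : X // i ∈ A} → {i : X // i ∈ A} → ℝ := fun i j =>
  ((Matrix.of fun a b : {i : X // i ∈ A} => P a.1 b.1) +
    (Matrix.of fun (a : {i : X // i ∈ A}) (b : {i : X // i ∉ A}) => P a.1 b.1) *
      (1 - Matrix.of fun a b : {i : X // i ∉ A} => P a.1 b.1)⁻¹ *
      (Matrix.of fun (a : {i : X // i ∉ A}) (b : {i : X // i ∈ A}) => P a.1 b.1)) i j

/-- The subsequence of `x` formed by all entries lying in `A`, in their original order. -/
noncomputable def subListIn {X : Type*} [DecidableEq X] (x : List X) (A : Finset X) :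
    List {i : X // i ∈ A} :=
  x.filterMap fun a => if h : a ∈ A then some ⟨a, h⟩ else none

/-- `x` is Supremus ε-typical with respect to `P`: for every nonempty `A ⊆ X` the
subsequence `x_A` is strongly Markov ε-typical with respect to the stochastic
complement `S_A` (whose invariant distribution is the normalized restriction of `π`). -/
def SupTypical {X : Type*} [Fintype X] [DecidableEq X]
    (P : X → X → ℝ) (π : X → ℝ) (ε : ℝ) (x : List X) : Prop :=
  ∀ A : Finset X, A.Nonempty →
    SMTypical (stochComp P A) (fun i : {i : X // i ∈ A} => π i.1 / ∑ j ∈ A, π j) ε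
      (subListIn x A)

/-- `H(S_A | π_A)`: the conditional entropy of the stochastic complement `S_A`
with respect to its invariant distribution `π_A`. -/
noncomputable def scCondEnt {X : Type*} [Fintype X] [DecidableEq X]
    (P : X → X → ℝ) (π : X → ℝ) (A : Finset X) : ℝ :=
  -∑ i : {i : X // i ∈ A}, ∑ j : {i : X // i ∈ A},
    (π i.1 / ∑ l ∈ A, π l) * stochComp P A i j * Real.logb 2 (stochComp P A i j)

open scoped Classical

/-- The set of additive cosets `K/I` of a left ideal `I`, each represented as a `Finset`. -/
noncomputable def cosetsOf {K : Type*} [Ring K] [Fintype K] (I : Ideal K) :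
    Finset (Finset K) :=
  Finset.univ.image fun x : K => Finset.univ.filter fun y => y - x ∈ I

/-- `H(S_{K/I} | π) = ∑_{A ∈ K/I} (∑_{j∈A} π_j) H(S_A | π_A)`. -/
noncomputable def ringHS {K : Type*} [Ring K] [Fintype K] [DecidableEq K]
    (P : K → K → ℝ) (π : K → ℝ) (I : Ideal K) : ℝ :=
  ∑ A ∈ cosetsOf I, (∑ j ∈ A, π j) * scCondEnt P π A

set_option linter.unusedSectionVars false
namespace Stmt6Aux

open Real

variable {β : Type*} [Fintype β] [DecidableEq β]

/-- weight of a path under transition matrix Q -/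
noncomputable def wt (Q : β → β → ℝ) (l : List β) : ℝ :=
  ((l.zip l.tail).map fun p => Q p.1 p.2).prod

@[simp] lemma wt_single (Q : β → β → ℝ) (a : β) : wt Q [a] = 1 := by simp [wt]

lemma wt_cons_cons (Q : β → β → ℝ) (a b : β) (t : List β) :
    wt Q (a :: b :: t) = Q a b * wt Q (b :: t) := by
  simp [wt, List.zip_cons_cons]

lemma wt_nonneg {Q : β → β → ℝ} (hQ : ∀ i j, 0 ≤ Q i j) (l : List β) : 0 ≤ wt Q l := by
  apply List.prod_nonneg
  intro a ha
  simp only [List.mem_map] at ha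
  obtain ⟨p, -, rfl⟩ := ha
  exact hQ _ _

lemma sum_wt {Q : β → β → ℝ} (hQ0 : ∀ i j, 0 ≤ Q i j) (hQ1 : ∀ i, ∑ j, Q i j = 1) :
    ∀ (m : ℕ) (a : β), ∑ z : Fin m → β, wt Q (a :: List.ofFn z) = 1 := by
  intro m
  induction m with
  | zero => intro a; simp
  | succ m ih =>
    intro a
    rw [← Equiv.sum_comp (Fin.consEquiv (fun _ : Fin (m+1) => β))
      (fun z => wt Q (a :: List.ofFn z))]
    rw [Fintype.sum_prod_type]
    have : ∀ (b : β) (z : Fin m → β),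
        wt Q (a :: List.ofFn ((Fin.consEquiv (fun _ : Fin (m+1) => β)) (b, z)))
          = Q a b * wt Q (b :: List.ofFn z) := by
      intro b z
      have h1 : List.ofFn ((Fin.consEquiv (fun _ : Fin (m+1) => β)) (b, z))
          = b :: List.ofFn z := by
        rw [List.ofFn_succ]
        simp [Fin.consEquiv]
      rw [h1, wt_cons_cons]
    simp only [this, ← Finset.mul_sum, ih, mul_one, hQ1]
  
end Stmt6Aux
set_option linter.unusedVariables false
set_option maxHeartbeats 1000000
namespace Stmt6Aux
open Real

variable {β : Type*} [Fintype β] [DecidableEq β]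

lemma rpow_finset_sum {γ : Type*} (s : Finset γ) (f : γ → ℝ) :
    (2:ℝ) ^ (∑ i ∈ s, f i) = ∏ i ∈ s, (2:ℝ) ^ f i := by
  induction s using Finset.cons_induction with
  | empty => simp
  | cons a s ha ih => rw [Finset.sum_cons, Finset.prod_cons, Real.rpow_add two_pos, ih]

lemma list_prod_map_eq_prod_pow {γ : Type*} [Fintype γ] [DecidableEq γ] [BEq γ] [LawfulBEq γ]
    (L : List γ) (f : γ → ℝ) : (L.map f).prod = ∏ a : γ, f a ^ L.count a := by
  induction L with
  | nil => simp
  | cons a L ih =>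
    have : ∀ b : γ, f b ^ (a :: L).count b = f b ^ L.count b * (if a = b then f b else 1) := by
      intro b
      rcases eq_or_ne a b with rfl | hne
      · rw [List.count_cons_self, pow_succ, if_pos rfl]
      · rw [List.count_cons_of_ne hne, if_neg hne, mul_one]
    simp only [List.map_cons, List.prod_cons, ih, this, Finset.prod_mul_distrib,
      Finset.prod_ite_eq, Finset.mem_univ, if_pos]
    ring

lemma wt_eq_prod_pow (Q : β → β → ℝ) (l : List β) :
    wt Q l = ∏ p : β × β, Q p.1 p.2 ^ pairCount l p.1 p.2 := by
  rw [wt, list_prod_map_eq_prod_pow]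
  exact Finset.prod_congr rfl fun p _ => by simp [pairCount]

/-- row sums of a count matrix -/
def rowS (N : β → β → ℕ) (i : β) : ℕ := ∑ j, N i j

/-- empirical transition matrix -/
noncomputable def Qhat (N : β → β → ℕ) (i j : β) : ℝ :=
  if rowS N i = 0 then (Fintype.card β : ℝ)⁻¹ else (N i j : ℝ) / (rowS N i : ℝ)

/-- log-weight of the count class -/
noncomputable def FN (N : β → β → ℕ) : ℝ :=
  ∑ p : β × β, (N p.1 p.2 : ℝ) * Real.logb 2 ((N p.1 p.2 : ℝ) / (rowS N p.1 : ℝ))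

lemma Qhat_nonneg [Nonempty β] (N : β → β → ℕ) (i j : β) : 0 ≤ Qhat N i j := by
  unfold Qhat
  split
  · positivity
  · positivity

lemma Qhat_rowsum [Nonempty β] (N : β → β → ℕ) (i : β) : ∑ j, Qhat N i j = 1 := by
  unfold Qhat
  by_cases h : rowS N i = 0
  · simp only [h, if_true]
    rw [Finset.sum_const, Finset.card_univ, nsmul_eq_mul]
    rw [mul_inv_cancel₀]
    exact Nat.cast_ne_zero.mpr Fintype.card_ne_zero
  · simp only [h, if_false]
    rw [← Finset.sum_div]
    rw [div_eq_one_iff_eq (by exact_mod_cast h)]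
    exact_mod_cast (rfl : ((rowS N i : ℕ) : ℝ) = _) ▸ (Nat.cast_sum _ _).symm

lemma wt_class (N : β → β → ℕ) (l : List β) (h : ∀ i j, pairCount l i j = N i j) :
    wt (Qhat N) l = (2:ℝ) ^ (FN N) := by
  rw [wt_eq_prod_pow, FN, rpow_finset_sum]
  refine Finset.prod_congr rfl fun p _ => ?_
  rw [h p.1 p.2]
  by_cases hz : N p.1 p.2 = 0
  · simp [hz]
  · have hrow : 0 < rowS N p.1 := by
      rcases Nat.eq_zero_or_pos (rowS N p.1) with h0 | h0
      · exact absurd (Finset.sum_eq_zero_iff.mp h0 p.2 (Finset.mem_univ _)) hz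
      · exact h0
    have hq : Qhat N p.1 p.2 = (N p.1 p.2 : ℝ) / (rowS N p.1 : ℝ) := by
      unfold Qhat; rw [if_neg (Nat.pos_iff_ne_zero.mp hrow)]
    have hqpos : 0 < (N p.1 p.2 : ℝ) / (rowS N p.1 : ℝ) := by
      apply div_pos <;> [exact_mod_cast Nat.pos_of_ne_zero hz; exact_mod_cast hrow]
    rw [hq, mul_comm, Real.rpow_mul (le_of_lt two_pos), Real.rpow_logb two_pos (by norm_num) hqpos,
      Real.rpow_natCast]

lemma class_card_le [Nonempty β] (N : β → β → ℕ) (m : ℕ) :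
    (((Finset.univ.filter fun z : Fin (m+1) → β =>
        ∀ i j, pairCount (List.ofFn z) i j = N i j).card : ℝ))
      ≤ (Fintype.card β : ℝ) * (2:ℝ) ^ (-(FN N)) := by
  set C := Finset.univ.filter fun z : Fin (m+1) → β =>
        ∀ i j, pairCount (List.ofFn z) i j = N i j with hC
  have key : ∀ a : β, ((C.filter fun z => z 0 = a).card : ℝ) * (2:ℝ)^(FN N) ≤ 1 := by
    intro a
    have hsum : ∑ z ∈ C.filter (fun z => z 0 = a), wt (Qhat N) (List.ofFn z)
        = ((C.filter fun z => z 0 = a).card : ℝ) * (2:ℝ)^(FN N) := by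
      rw [show (∑ z ∈ C.filter (fun z => z 0 = a), wt (Qhat N) (List.ofFn z))
          = ∑ _z ∈ C.filter (fun z => z 0 = a), (2:ℝ)^(FN N) from
        Finset.sum_congr rfl fun z hz =>
          wt_class N _ (Finset.mem_filter.mp (Finset.mem_filter.mp hz).1).2]
      rw [Finset.sum_const, nsmul_eq_mul]
    set tl : (Fin (m+1) → β) → (Fin m → β) := fun z i => z i.succ with htl
    have hofn : ∀ z ∈ C.filter (fun z => z 0 = a),
        List.ofFn z = a :: List.ofFn (tl z) := by
      intro z hz
      have h0 : z 0 = a := (Finset.mem_filter.mp hz).2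
      rw [List.ofFn_succ, h0]
    have hinj : ∀ z₁ ∈ C.filter (fun z => z 0 = a), ∀ z₂ ∈ C.filter (fun z => z 0 = a),
        tl z₁ = tl z₂ → z₁ = z₂ := by
      intro z₁ h₁ z₂ h₂ h
      have e₁ : z₁ 0 = a := (Finset.mem_filter.mp h₁).2
      have e₂ : z₂ 0 = a := (Finset.mem_filter.mp h₂).2
      funext i
      refine Fin.cases ?_ ?_ i
      · rw [e₁, e₂]
      · intro k
        exact congrFun h k
    have h2 : ∑ z ∈ C.filter (fun z => z 0 = a), wt (Qhat N) (List.ofFn z)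
        ≤ ∑ t : Fin m → β, wt (Qhat N) (a :: List.ofFn t) :=
      calc ∑ z ∈ C.filter (fun z => z 0 = a), wt (Qhat N) (List.ofFn z)
          = ∑ z ∈ C.filter (fun z => z 0 = a), wt (Qhat N) (a :: List.ofFn (tl z)) :=
            Finset.sum_congr rfl fun z hz => by rw [hofn z hz]
        _ = ∑ t ∈ (C.filter (fun z => z 0 = a)).image tl, wt (Qhat N) (a :: List.ofFn t) :=
            (Finset.sum_image (f := fun t => wt (Qhat N) (a :: List.ofFn t)) hinj).symm
        _ ≤ ∑ t : Fin m → β, wt (Qhat N) (a :: List.ofFn t) :=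
            Finset.sum_le_sum_of_subset_of_nonneg (Finset.subset_univ _)
              (fun t _ _ => wt_nonneg (Qhat_nonneg N) _)
    rw [sum_wt (Qhat_nonneg N) (Qhat_rowsum N) m a] at h2
    rw [hsum] at h2
    exact h2
  have hcard : C.card = ∑ a : β, (C.filter fun z => z 0 = a).card :=
    Finset.card_eq_sum_card_fiberwise (fun z _ => Finset.mem_univ (z 0))
  have : (C.card : ℝ) * (2:ℝ)^(FN N) ≤ Fintype.card β := by
    rw [hcard]
    push_cast
    rw [Finset.sum_mul]
    calc ∑ a : β, ((C.filter fun z => z 0 = a).card : ℝ) * (2:ℝ)^(FN N)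
        ≤ ∑ _a : β, (1:ℝ) := Finset.sum_le_sum (fun a _ => key a)
      _ = Fintype.card β := by simp
  have h2pos : (0:ℝ) < (2:ℝ)^(FN N) := Real.rpow_pos_of_pos two_pos _
  rw [Real.rpow_neg (le_of_lt two_pos), ← div_eq_mul_inv, le_div_iff₀ h2pos]
  exact this

end Stmt6Aux
set_option linter.unusedSectionVars false
namespace Stmt6Aux
open Real

variable {β : Type*} [Fintype β] [DecidableEq β]

/-- `g t = -(t * log₂ t)` -/
noncomputable def g (t : ℝ) : ℝ := -(t * Real.logb 2 t)

lemma continuous_g : Continuous g := by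
  have : g = fun t => Real.negMulLog t / Real.log 2 := by
    funext t
    simp [g, Real.negMulLog, Real.logb, div_eq_mul_inv, mul_assoc, neg_mul]
  rw [this]
  exact Real.continuous_negMulLog.div_const _

lemma sum_count_univ {γ : Type*} [Fintype γ] [DecidableEq γ] [BEq γ] [LawfulBEq γ]
    (L : List γ) : ∑ p : γ, L.count p = L.length := by
  induction L with
  | nil => simp
  | cons a L ih =>
    simp only [List.count_cons, List.length_cons, Finset.sum_add_distrib, ih]
    congr 1
    rw [Finset.sum_eq_single a]
    · simp
    · intro b _ hb
      simp [hb, Ne.symm hb]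
    · intro h
      exact absurd (Finset.mem_univ a) h

lemma stateCount_le_length (l : List β) (i : β) : stateCount l i ≤ l.length := by
  unfold stateCount pairCount
  calc ∑ j, (l.zip l.tail).count (i, j)
      ≤ ∑ p : β × β, (l.zip l.tail).count p := by
        rw [Fintype.sum_prod_type]
        refine Finset.single_le_sum (f := fun i => ∑ j, (l.zip l.tail).count (i, j))
          (fun _ _ => ?_) (Finset.mem_univ i)
        positivity
    _ = (l.zip l.tail).length := sum_count_univ _
    _ ≤ l.length := by rw [List.length_zip]; omega

lemma pairCount_le_stateCount (l : List β) (i j : β) : pairCount l i j ≤ stateCount l i :=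
  Finset.single_le_sum (f := fun j => pairCount l i j) (fun _ _ => Nat.zero_le _)
    (Finset.mem_univ j)

lemma pairCount_le_length (l : List β) (i j : β) : pairCount l i j ≤ l.length :=
  le_trans (pairCount_le_stateCount l i j) (stateCount_le_length l i)

lemma ratio_mem (l : List β) (i j : β) :
    (pairCount l i j : ℝ) / (stateCount l i : ℝ) ∈ Set.Icc (0:ℝ) 1 := by
  constructor
  · positivity
  · rcases Nat.eq_zero_or_pos (stateCount l i) with h | h
    · simp [h]
    · rw [div_le_one (by exact_mod_cast h)]
      exact_mod_cast pairCount_le_stateCount l i j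

lemma negFN_eq (N : β → β → ℕ) :
    -FN N = ∑ p : β × β, (rowS N p.1 : ℝ) * g ((N p.1 p.2 : ℝ) / (rowS N p.1 : ℝ)) := by
  rw [FN, ← Finset.sum_neg_distrib]
  refine Finset.sum_congr rfl fun p _ => ?_
  by_cases hz : N p.1 p.2 = 0
  · simp [hz, g]
  · have hrow : rowS N p.1 ≠ 0 := by
      intro h0
      exact hz (Finset.sum_eq_zero_iff.mp h0 p.2 (Finset.mem_univ _))
    have hrow' : ((rowS N p.1 : ℕ) : ℝ) ≠ 0 := Nat.cast_ne_zero.mpr hrow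
    have : (N p.1 p.2 : ℝ) = ((N p.1 p.2 : ℝ) / (rowS N p.1 : ℝ)) * (rowS N p.1 : ℝ) :=
      (div_mul_cancel₀ _ hrow').symm
    rw [g]
    nth_rewrite 1 [this]
    ring

lemma mcCondEnt_eq (Q : β → β → ℝ) (q : β → ℝ) :
    mcCondEnt Q q = ∑ p : β × β, q p.1 * g (Q p.1 p.2) := by
  rw [mcCondEnt, Fintype.sum_prod_type, ← Finset.sum_neg_distrib]
  refine Finset.sum_congr rfl fun i _ => ?_
  rw [← Finset.sum_neg_distrib]
  refine Finset.sum_congr rfl fun j _ => ?_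
  simp only [g]
  ring

end Stmt6Aux
set_option linter.unusedVariables false
set_option maxHeartbeats 1000000
namespace Stmt6Aux
open Real

variable {β : Type*} [Fintype β] [DecidableEq β]

lemma exists_bound_g : ∃ M : ℝ, 0 ≤ M ∧ ∀ t ∈ Set.Icc (0:ℝ) 1, |g t| ≤ M := by
  obtain ⟨M, hM⟩ := (isCompact_Icc (a := (0:ℝ)) (b := 1)).exists_bound_of_continuousOn
    continuous_g.continuousOn
  exact ⟨max M 0, le_max_right _ _, fun t ht =>
    le_trans (by simpa [Real.norm_eq_abs] using hM t ht) (le_max_left _ _)⟩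

lemma exists_uc_g {δ' : ℝ} (hδ' : 0 < δ') :
    ∃ ε₁ > 0, ∀ s ∈ Set.Icc (-1:ℝ) 2, ∀ t ∈ Set.Icc (-1:ℝ) 2, |s - t| < ε₁ →
      |g s - g t| < δ' := by
  have huc : UniformContinuousOn g (Set.Icc (-1:ℝ) 2) :=
    (isCompact_Icc).uniformContinuousOn_of_continuous continuous_g.continuousOn
  rw [Metric.uniformContinuousOn_iff] at huc
  obtain ⟨ε₁, hε₁, h⟩ := huc δ' hδ'
  refine ⟨ε₁, hε₁, fun s hs t ht hst => ?_⟩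
  have := h s hs t ht (by rwa [Real.dist_eq])
  rwa [Real.dist_eq] at this

lemma core [Nonempty β] (Q : β → β → ℝ) (q : β → ℝ) (hq : ∀ i, |q i| ≤ 1)
    {δ : ℝ} (hδ : 0 < δ) :
    ∃ ε₀ > 0, ∀ ε : ℝ, 0 < ε → ε < ε₀ → ∀ m : ℕ,
      ((Finset.univ.filter fun z : Fin m → β => SMTypical Q q ε (List.ofFn z)).card : ℝ)
        ≤ (Fintype.card β : ℝ) * ((m:ℝ)+1) ^ (Fintype.card β ^ 2)
            * (2:ℝ) ^ ((m:ℝ) * (mcCondEnt Q q + δ)) := by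
  obtain ⟨M, hM0, hM⟩ := exists_bound_g
  set cβ := Fintype.card β with hcβdef
  have hcβ : 0 < cβ := Fintype.card_pos
  set δ' : ℝ := δ / (2 * ((cβ:ℝ)^2 + 1)) with hδ'def
  have hδ' : 0 < δ' := by positivity
  obtain ⟨ε₁, hε₁, huc⟩ := exists_uc_g hδ'
  refine ⟨min 1 (min ε₁ (δ' / (M+1))), by positivity, ?_⟩
  intro ε hε hεlt m
  have hε1 : ε < 1 := lt_of_lt_of_le hεlt (min_le_left _ _)
  have hεε₁ : ε < ε₁ := lt_of_lt_of_le hεlt (le_trans (min_le_right _ _) (min_le_left _ _))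
  have hεM : ε < δ' / (M+1) := lt_of_lt_of_le hεlt (le_trans (min_le_right _ _) (min_le_right _ _))
  cases m with
  | zero =>
    have h1 : (Finset.univ.filter fun z : Fin 0 → β => SMTypical Q q ε (List.ofFn z)).card ≤ 1 := by
      calc (Finset.univ.filter fun z : Fin 0 → β => SMTypical Q q ε (List.ofFn z)).card
          ≤ (Finset.univ : Finset (Fin 0 → β)).card := Finset.card_filter_le _ _
        _ = 1 := by simp
    have h2 : (1:ℝ) ≤ (cβ:ℝ) := by exact_mod_cast hcβ
    calc ((Finset.univ.filter fun z : Fin 0 → β => SMTypical Q q ε (List.ofFn z)).card : ℝ)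
        ≤ 1 := by exact_mod_cast h1
      _ ≤ (cβ:ℝ) * ((0:ℝ)+1) ^ (cβ^2) * (2:ℝ) ^ ((0:ℝ) * (mcCondEnt Q q + δ)) := by
          rw [zero_mul, Real.rpow_zero]; simp [h2]
      _ = (cβ:ℝ) * (((0:ℕ):ℝ)+1) ^ (cβ^2) * (2:ℝ) ^ (((0:ℕ):ℝ) * (mcCondEnt Q q + δ)) := by
          norm_num
  | succ m' =>
    set mR : ℝ := ((m' + 1 : ℕ) : ℝ) with hmRdef
    have hmR : (0:ℝ) < mR := by positivity
    -- entropy bound for any typical z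
    have hent : ∀ z : Fin (m'+1) → β, SMTypical Q q ε (List.ofFn z) →
        -FN (fun i j => pairCount (List.ofFn z) i j) ≤ mR * (mcCondEnt Q q + δ) := by
      intro z hz
      set l := List.ofFn z with hl
      have hlen : (l.length : ℝ) = mR := by rw [hl, List.length_ofFn]
      have hterm : ∀ p : β × β,
          (rowS (fun i j => pairCount l i j) p.1 : ℝ) *
            g ((pairCount l p.1 p.2 : ℝ) / (rowS (fun i j => pairCount l i j) p.1 : ℝ))
          ≤ mR * (q p.1 * g (Q p.1 p.2) + 2*δ') := by
        intro p
        show (stateCount l p.1 : ℝ) *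
          g ((pairCount l p.1 p.2 : ℝ) / (stateCount l p.1 : ℝ)) ≤ _
        obtain ⟨h1, h2⟩ := hz p.1 p.2
        rw [hlen] at h2
        set s : ℝ := (stateCount l p.1 : ℝ) with hs
        set r : ℝ := (pairCount l p.1 p.2 : ℝ) / s with hr
        have hr01 : r ∈ Set.Icc (0:ℝ) 1 := ratio_mem l p.1 p.2
        have hgr : |g r| ≤ M := hM r hr01
        have habs := abs_lt.mp h1
        have hQmem : Q p.1 p.2 ∈ Set.Icc (-1:ℝ) 2 := by
          constructor
          · nlinarith [hr01.1, hr01.2]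
          · nlinarith [hr01.1, hr01.2]
        have hgdiff : |g r - g (Q p.1 p.2)| < δ' :=
          huc r ⟨by linarith [hr01.1], by linarith [hr01.2]⟩ (Q p.1 p.2) hQmem
            (lt_trans h1 hεε₁)
        have hsr : s = mR * (s / mR) := by field_simp
        have hdiff : (s / mR) * g r - q p.1 * g (Q p.1 p.2) ≤ 2*δ' := by
          have e1 : (s / mR) * g r - q p.1 * g (Q p.1 p.2)
              = (s / mR - q p.1) * g r + q p.1 * (g r - g (Q p.1 p.2)) := by ring
          have b1 : (s / mR - q p.1) * g r ≤ ε * M := by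
            calc (s / mR - q p.1) * g r ≤ |(s / mR - q p.1) * g r| := le_abs_self _
              _ = |s / mR - q p.1| * |g r| := abs_mul _ _
              _ ≤ ε * M := by
                  apply mul_le_mul (le_of_lt h2) hgr (abs_nonneg _) (le_of_lt hε)
          have b2 : q p.1 * (g r - g (Q p.1 p.2)) ≤ δ' := by
            calc q p.1 * (g r - g (Q p.1 p.2)) ≤ |q p.1 * (g r - g (Q p.1 p.2))| := le_abs_self _
              _ = |q p.1| * |g r - g (Q p.1 p.2)| := abs_mul _ _
              _ ≤ 1 * δ' := by
                  apply mul_le_mul (hq p.1) (le_of_lt hgdiff) (abs_nonneg _) zero_le_one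
              _ = δ' := one_mul _
          have hεMδ : ε * M ≤ δ' := by
            have h' : ε * (M + 1) ≤ δ' := by
              rw [← le_div_iff₀ (by positivity : (0:ℝ) < M + 1)]
              exact le_of_lt hεM
            nlinarith
          linarith [e1 ▸ (add_le_add b1 b2)]
        calc s * g r = mR * ((s / mR) * g r) := by rw [← mul_assoc, ← hsr]
          _ ≤ mR * (q p.1 * g (Q p.1 p.2) + 2*δ') := by
              apply mul_le_mul_of_nonneg_left _ (le_of_lt hmR)
              linarith
      calc -FN (fun i j => pairCount l i j)
            = ∑ p : β × β, (rowS (fun i j => pairCount l i j) p.1 : ℝ) *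
                g ((pairCount l p.1 p.2 : ℝ) / (rowS (fun i j => pairCount l i j) p.1 : ℝ)) :=
            negFN_eq _
        _ ≤ ∑ p : β × β, mR * (q p.1 * g (Q p.1 p.2) + 2*δ') := Finset.sum_le_sum fun p _ => hterm p
        _ = mR * (mcCondEnt Q q + (cβ:ℝ)^2 * (2*δ')) := by
            rw [← Finset.mul_sum, Finset.sum_add_distrib, Finset.sum_const, mcCondEnt_eq]
            simp only [Finset.card_univ, Fintype.card_prod, nsmul_eq_mul]
            push_cast
            ring
        _ ≤ mR * (mcCondEnt Q q + δ) := by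
            apply mul_le_mul_of_nonneg_left _ (le_of_lt hmR)
            have : (cβ:ℝ)^2 * (2*δ') ≤ δ := by
              rw [hδ'def]
              rw [div_eq_mul_inv]
              have hpos : (0:ℝ) < 2 * ((cβ:ℝ)^2 + 1) := by positivity
              calc (cβ:ℝ)^2 * (2 * (δ * (2 * ((cβ:ℝ)^2 + 1))⁻¹))
                  = δ * ((cβ:ℝ)^2 * (2 * ((cβ:ℝ)^2+1))⁻¹ * 2) := by ring
                _ ≤ δ * 1 := by
                    apply mul_le_mul_of_nonneg_left _ (le_of_lt hδ)
                    rw [mul_comm, ← mul_assoc, mul_inv_le_iff₀ hpos]  -- 2 * cβ^2 ≤ 1 * (2 (cβ²+1))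
                    nlinarith [sq_nonneg (cβ:ℝ)]
                _ = δ := mul_one _
            linarith
    -- counting
    set T := Finset.univ.filter fun z : Fin (m'+1) → β => SMTypical Q q ε (List.ofFn z) with hT
    set pc : (Fin (m'+1) → β) → (β → β → ℕ) := fun z i j => pairCount (List.ofFn z) i j with hpc
    have hfib : T.card = ∑ N ∈ T.image pc, (T.filter fun z => pc z = N).card :=
      Finset.card_eq_sum_card_fiberwise (fun z hz => Finset.mem_image_of_mem pc hz)
    have hbd : ∀ N ∈ T.image pc, ∀ i j, N i j < m' + 2 := by
      intro N hN i j
      obtain ⟨z, hz, rfl⟩ := Finset.mem_image.mp hN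
      have h := pairCount_le_length (List.ofFn z) i j
      rw [List.length_ofFn] at h
      show pairCount (List.ofFn z) i j < m' + 2
      omega
    have himgcard : (T.image pc).card ≤ (m'+2) ^ (cβ^2) := by
      have hinj : ∀ N₁ ∈ T.image pc, ∀ N₂ ∈ T.image pc,
          (fun i j => (⟨N₁ i j % (m'+2), Nat.mod_lt _ (by omega)⟩ : Fin (m'+2)))
            = (fun i j => (⟨N₂ i j % (m'+2), Nat.mod_lt _ (by omega)⟩ : Fin (m'+2))) → N₁ = N₂ := by
        intro N₁ h₁ N₂ h₂ h
        funext i j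
        have := congrFun (congrFun h i) j
        have h' : N₁ i j % (m'+2) = N₂ i j % (m'+2) := congrArg Fin.val this
        rw [Nat.mod_eq_of_lt (hbd N₁ h₁ i j), Nat.mod_eq_of_lt (hbd N₂ h₂ i j)] at h'
        exact h'
      calc (T.image pc).card
          ≤ (Finset.univ : Finset (β → β → Fin (m'+2))).card :=
            Finset.card_le_card_of_injOn _ (fun N _ => Finset.mem_univ _) hinj
        _ = (m'+2) ^ (cβ^2) := by
            rw [Finset.card_univ, Fintype.card_fun, Fintype.card_fun, Fintype.card_fin,
              ← pow_mul, ← pow_two]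
    have hfiber : ∀ N ∈ T.image pc, ((T.filter fun z => pc z = N).card : ℝ)
        ≤ (cβ:ℝ) * (2:ℝ) ^ (mR * (mcCondEnt Q q + δ)) := by
      intro N hN
      obtain ⟨z₀, hz₀T, hz₀⟩ := Finset.mem_image.mp hN
      have hz₀typ : SMTypical Q q ε (List.ofFn z₀) := (Finset.mem_filter.mp hz₀T).2
      have hsub : (T.filter fun z => pc z = N) ⊆
          Finset.univ.filter fun z : Fin (m'+1) → β =>
            ∀ i j, pairCount (List.ofFn z) i j = N i j := by
        intro z hz
        obtain ⟨hz1, hz2⟩ := Finset.mem_filter.mp hz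
        refine Finset.mem_filter.mpr ⟨Finset.mem_univ _, fun i j => ?_⟩
        rw [← hz2]
      have hFN : -FN N ≤ mR * (mcCondEnt Q q + δ) := by
        rw [← hz₀]
        exact hent z₀ hz₀typ
      calc ((T.filter fun z => pc z = N).card : ℝ)
          ≤ ((Finset.univ.filter fun z : Fin (m'+1) → β =>
              ∀ i j, pairCount (List.ofFn z) i j = N i j).card : ℝ) := by
            exact_mod_cast Finset.card_le_card hsub
        _ ≤ (cβ:ℝ) * (2:ℝ) ^ (-FN N) := class_card_le N m'
        _ ≤ (cβ:ℝ) * (2:ℝ) ^ (mR * (mcCondEnt Q q + δ)) := by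
            apply mul_le_mul_of_nonneg_left _ (by positivity)
            exact Real.rpow_le_rpow_of_exponent_le one_le_two hFN
    calc ((Finset.univ.filter fun z : Fin (m'+1) → β =>
            SMTypical Q q ε (List.ofFn z)).card : ℝ)
        = ∑ N ∈ T.image pc, ((T.filter fun z => pc z = N).card : ℝ) := by
          rw [← hT]; exact_mod_cast hfib
      _ ≤ ∑ N ∈ T.image pc, (cβ:ℝ) * (2:ℝ) ^ (mR * (mcCondEnt Q q + δ)) :=
          Finset.sum_le_sum hfiber
      _ = ((T.image pc).card : ℝ) * ((cβ:ℝ) * (2:ℝ) ^ (mR * (mcCondEnt Q q + δ))) := by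
          rw [Finset.sum_const, nsmul_eq_mul]
      _ ≤ ((m'+2 : ℕ):ℝ) ^ (cβ^2) * ((cβ:ℝ) * (2:ℝ) ^ (mR * (mcCondEnt Q q + δ))) := by
          apply mul_le_mul_of_nonneg_right _ (by positivity)
          exact_mod_cast himgcard
      _ = (cβ:ℝ) * (((m'+1 : ℕ):ℝ)+1) ^ (cβ^2) * (2:ℝ) ^ (((m'+1:ℕ):ℝ) * (mcCondEnt Q q + δ)) := by
          rw [hmRdef]
          push_cast
          ring

end Stmt6Aux
set_option linter.unusedSectionVars false
namespace Stmt6Aux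
open Finset

section Lists
variable {X : Type*} [DecidableEq X]

lemma subListIn_cons_mem (a : X) (t : List X) {A : Finset X} (h : a ∈ A) :
    subListIn (a :: t) A = ⟨a, h⟩ :: subListIn t A := by
  simp [subListIn, h]

lemma subListIn_cons_not_mem (a : X) (t : List X) {A : Finset X} (h : a ∉ A) :
    subListIn (a :: t) A = subListIn t A := by
  simp [subListIn, h]

lemma length_subListIn_le (x : List X) (A : Finset X) :
    (subListIn x A).length ≤ x.length :=
  List.length_filterMap_le _ _

lemma length_subListIn [Fintype X] (x : List X) (A : Finset X) :
    (subListIn x A).length = ∑ i ∈ A, x.count i := by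
  induction x with
  | nil => simp [subListIn]
  | cons a t ih =>
    have hc : ∀ i : X, (a :: t).count i = t.count i + if i = a then 1 else 0 := by
      intro i
      rcases eq_or_ne i a with rfl | hne
      · rw [List.count_cons_self, if_pos rfl]
      · rw [List.count_cons_of_ne hne.symm, if_neg hne, add_zero]
    by_cases h : a ∈ A
    · rw [subListIn_cons_mem a t h]
      simp only [List.length_cons, ih, hc, Finset.sum_add_distrib, Finset.sum_ite_eq' A a]
      rw [if_pos h]
    · rw [subListIn_cons_not_mem a t h]
      simp only [ih, hc, Finset.sum_add_distrib, Finset.sum_ite_eq' A a]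
      rw [if_neg h]
      omega

lemma exists_ofFn_of_length {γ : Type*} (L : List γ) (m : ℕ) (h : L.length = m) :
    ∃ z : Fin m → γ, List.ofFn z = L := by
  subst h
  exact ⟨L.get, List.ofFn_get L⟩

lemma map_fst_zip_tail (l : List X) : ((l.zip l.tail).map Prod.fst) = l.dropLast := by
  induction l with
  | nil => simp
  | cons a t ih =>
    cases t with
    | nil => simp
    | cons b t' =>
      have ih' : List.map Prod.fst ((b :: t').zip t') = (b :: t').dropLast := ih
      rw [show (a :: b :: t').tail = b :: t' from rfl, List.zip_cons_cons, List.map_cons, ih']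
      rfl

lemma sum_count_pairs [Fintype X] (L : List (X × X)) (i : X) :
    ∑ j : X, L.count (i, j) = (L.map Prod.fst).count i := by
  induction L with
  | nil => simp
  | cons p L ih =>
    have hc : ∀ j : X, (p :: L).count (i, j) = L.count (i, j) + if (i, j) = p then 1 else 0 := by
      intro j
      rcases eq_or_ne (i, j) p with h | hne
      · rw [← h, List.count_cons_self, if_pos rfl]
      · rw [List.count_cons_of_ne hne.symm, if_neg hne, add_zero]
    simp only [hc, Finset.sum_add_distrib, ih, List.map_cons]
    have hsum : (∑ j : X, if (i, j) = p then 1 else 0) = if i = p.1 then 1 else 0 := by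
      rcases eq_or_ne i p.1 with h | hne
      · subst h
        rw [if_pos rfl, Finset.sum_eq_single p.2]
        · simp
        · intro j _ hj
          simp [Prod.ext_iff, hj]
        · intro h
          exact absurd (Finset.mem_univ p.2) h
      · rw [if_neg hne]
        apply Finset.sum_eq_zero
        intro j _
        simp [Prod.ext_iff, hne]
    rw [hsum]
    rcases eq_or_ne i p.1 with h | hne
    · subst h
      rw [List.count_cons_self, if_pos rfl]
    · rw [List.count_cons_of_ne hne.symm, if_neg hne, add_zero]

lemma stateCount_eq_count_dropLast [Fintype X] (l : List X) (i : X) :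
    stateCount l i = l.dropLast.count i := by
  rw [stateCount, ← map_fst_zip_tail]
  exact sum_count_pairs _ i

lemma count_le_stateCount_add_one [Fintype X] (l : List X) (i : X) :
    l.count i ≤ stateCount l i + 1 ∧ stateCount l i ≤ l.count i := by
  rw [stateCount_eq_count_dropLast]
  rcases List.eq_nil_or_concat l with rfl | ⟨l', a, rfl⟩
  · simp
  · rw [List.concat_eq_append, List.dropLast_concat, List.count_append]
    have : (([a] : List X).count i) ≤ 1 := List.count_le_length
    omega

end Lists

section CosetsCore
variable {K : Type*} [Ring K] [Fintype K] (I : Ideal K)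

lemma mem_cosetsOf_iff {A : Finset K} :
    A ∈ cosetsOf I ↔ ∃ c : K, ∀ y : K, y ∈ A ↔ y - c ∈ I := by
  unfold cosetsOf
  rw [Finset.mem_image]
  constructor
  · rintro ⟨c, -, rfl⟩
    exact ⟨c, fun y => by simp⟩
  · rintro ⟨c, hc⟩
    refine ⟨c, Finset.mem_univ c, ?_⟩
    ext y
    simp [hc y]

lemma exists_coset (a : K) : ∃ A ∈ cosetsOf I, a ∈ A := by
  refine ⟨Finset.univ.filter (fun y => y - a ∈ I), (mem_cosetsOf_iff I).mpr ⟨a, fun y => by simp⟩, ?_⟩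
  simp only [Finset.mem_filter, Finset.mem_univ, true_and, sub_self]
  exact I.zero_mem

lemma cosetsOf_nonempty {A : Finset K} (hA : A ∈ cosetsOf I) : A.Nonempty := by
  obtain ⟨c, hc⟩ := (mem_cosetsOf_iff I).mp hA
  exact ⟨c, (hc c).mpr (by simpa using I.zero_mem)⟩

lemma sub_mem_of_mem_coset {A : Finset K} (hA : A ∈ cosetsOf I) {a b : K}
    (ha : a ∈ A) (hb : b ∈ A) : a - b ∈ I := by
  obtain ⟨c, hc⟩ := (mem_cosetsOf_iff I).mp hA
  have h : (a - c) - (b - c) ∈ I := I.sub_mem ((hc a).mp ha) ((hc b).mp hb)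
  simpa using h

lemma mem_coset_iff_of_sub_mem {A : Finset K} (hA : A ∈ cosetsOf I) {a b : K}
    (hab : a - b ∈ I) : a ∈ A ↔ b ∈ A := by
  obtain ⟨c, hc⟩ := (mem_cosetsOf_iff I).mp hA
  rw [hc a, hc b]
  constructor
  · intro h
    have h2 : (a - c) - (a - b) ∈ I := I.sub_mem h hab
    simpa using h2
  · intro h
    have h2 : (a - b) + (b - c) ∈ I := I.add_mem hab h
    simpa using h2

lemma cosets_disjoint {A B : Finset K} (hA : A ∈ cosetsOf I) (hB : B ∈ cosetsOf I)
    {a : K} (haA : a ∈ A) (haB : a ∈ B) : A = B := by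
  obtain ⟨c, hc⟩ := (mem_cosetsOf_iff I).mp hA
  obtain ⟨d, hd⟩ := (mem_cosetsOf_iff I).mp hB
  have h1 : a - c ∈ I := (hc a).mp haA
  have h2 : a - d ∈ I := (hd a).mp haB
  ext y
  rw [hc y, hd y]
  constructor
  · intro h
    have h3 : (y - c) - ((a - c) - (a - d)) ∈ I := I.sub_mem h (I.sub_mem h1 h2)
    simpa using h3
  · intro h
    have h3 : (y - d) + ((a - c) - (a - d)) ∈ I := I.add_mem h (I.sub_mem h1 h2)
    simpa [sub_add_sub_cancel] using h3

end CosetsCore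

section Cosets
variable {K : Type*} [Ring K] [Fintype K] [DecidableEq K] (I : Ideal K)

lemma eq_of_subListIn_eq :
    ∀ u v : List K, List.Forall₂ (fun a b => a - b ∈ I) u v →
      (∀ A ∈ cosetsOf I, subListIn u A = subListIn v A) → u = v := by
  intro u v h
  induction h with
  | nil => intro _; rfl
  | @cons a b u' v' hab htail ih =>
    intro hsub
    obtain ⟨A₀, hA₀mem, haA₀⟩ := exists_coset I a
    have hA := hsub A₀ hA₀mem
    have hb : b ∈ A₀ := (mem_coset_iff_of_sub_mem I hA₀mem hab).mp haA₀
    rw [subListIn_cons_mem a u' haA₀, subListIn_cons_mem b v' hb] at hA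
    have hab' : a = b := congrArg Subtype.val (List.cons_eq_cons.mp hA).1
    subst hab'
    have htails : ∀ A ∈ cosetsOf I, subListIn u' A = subListIn v' A := by
      intro A hAmem
      have h := hsub A hAmem
      by_cases haA : a ∈ A
      · rw [subListIn_cons_mem a u' haA, subListIn_cons_mem a v' haA] at h
        exact (List.cons_eq_cons.mp h).2
      · rwa [subListIn_cons_not_mem a u' haA, subListIn_cons_not_mem a v' haA] at h
    rw [ih htails]

lemma length_subListIn_eq_of_sub_mem {A : Finset K} (hA : A ∈ cosetsOf I) :
    ∀ u v : List K, List.Forall₂ (fun a b => a - b ∈ I) u v →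
      (subListIn u A).length = (subListIn v A).length := by
  intro u v h
  induction h with
  | nil => rfl
  | @cons a b u' v' hab htail ih =>
    by_cases haA : a ∈ A
    · have hbA : b ∈ A := (mem_coset_iff_of_sub_mem I hA hab).mp haA
      rw [subListIn_cons_mem a u' haA, subListIn_cons_mem b v' hbA]
      simpa using ih
    · have hbA : b ∉ A := fun hb => haA ((mem_coset_iff_of_sub_mem I hA hab).mpr hb)
      rwa [subListIn_cons_not_mem a u' haA, subListIn_cons_not_mem b v' hbA]

lemma card_cosetsOf_le : (cosetsOf I).card ≤ Fintype.card K := by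
  have hdisj : (↑(cosetsOf I) : Set (Finset K)).PairwiseDisjoint id := by
    intro A hA B hB hne
    simp only [Finset.mem_coe] at hA hB
    rw [Function.onFun, Finset.disjoint_left]
    intro a haA haB
    exact hne (cosets_disjoint I hA hB haA haB)
  calc (cosetsOf I).card = ∑ _A ∈ cosetsOf I, 1 := Finset.card_eq_sum_ones _
    _ ≤ ∑ A ∈ cosetsOf I, A.card :=
        Finset.sum_le_sum fun A hA => Finset.card_pos.mpr (cosetsOf_nonempty I hA)
    _ = ∑ A ∈ cosetsOf I, ∑ _i ∈ A, 1 := by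
        refine Finset.sum_congr rfl fun A _ => Finset.card_eq_sum_ones _
    _ = ∑ _i ∈ (cosetsOf I).biUnion id, 1 := (Finset.sum_biUnion hdisj).symm
    _ ≤ ∑ _i : K, 1 := Finset.sum_le_sum_of_subset (Finset.subset_univ _)
    _ = Fintype.card K := by simp

end Cosets
end Stmt6Aux
set_option linter.unusedSectionVars false
set_option maxHeartbeats 1000000
namespace Stmt6Aux
open Finset

lemma count_map_inj {α β : Type*} [BEq α] [LawfulBEq α] [BEq β] [LawfulBEq β]
    (l : List α) (f : α → β) (hf : Function.Injective f) (a : α) :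
    (l.map f).count (f a) = l.count a := by
  induction l with
  | nil => simp
  | cons b t ih => simp [List.count_cons, ih, hf.eq_iff]

section Univ
variable {X : Type*} [Fintype X] [DecidableEq X]

/-- embedding into the `univ` subtype -/
def eU : X → {i : X // i ∈ (Finset.univ : Finset X)} := fun a => ⟨a, Finset.mem_univ a⟩

lemma eU_injective : Function.Injective (eU (X := X)) := fun a b h => congrArg Subtype.val h

lemma subListIn_univ (x : List X) :
    subListIn x (Finset.univ : Finset X) = x.map eU := by
  induction x with
  | nil => rfl
  | cons a t ih => rw [List.map_cons, ← ih, subListIn_cons_mem a t (Finset.mem_univ a)]; rfl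

lemma length_subListIn_univ (x : List X) :
    (subListIn x (Finset.univ : Finset X)).length = x.length := by
  rw [subListIn_univ, List.length_map]

lemma pairCount_subListIn_univ (x : List X) (i j : X) :
    pairCount (subListIn x (Finset.univ : Finset X)) (eU i) (eU j) = pairCount x i j := by
  rw [subListIn_univ, pairCount, pairCount]
  have h1 : (x.map eU).tail = x.tail.map eU := by
    cases x <;> simp
  rw [h1, List.zip_map, ← Prod.map_apply]
  exact @count_map_inj _ _ _ _ (@instBEqProd _ _ instBEqOfDecidableEq instBEqOfDecidableEq) _
    (x.zip x.tail) (Prod.map eU eU)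
    (Function.Injective.prodMap eU_injective eU_injective) (i, j)

lemma stateCount_subListIn_univ (x : List X) (i : X) :
    stateCount (subListIn x (Finset.univ : Finset X)) (eU i) = stateCount x i := by
  unfold stateCount
  refine (Fintype.sum_bijective eU ⟨eU_injective, fun j' => ⟨j'.1, by cases j'; rfl⟩⟩ _ _
    (fun j => ?_)).symm
  rw [pairCount_subListIn_univ]

end Univ

section PiA
variable {K : Type*} [Fintype K] [DecidableEq K]

lemma piA_mem_Icc (π : K → ℝ) (hnn : ∀ i, 0 ≤ π i) (A : Finset K) (i : {i : K // i ∈ A}) :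
    π i.1 / ∑ j ∈ A, π j ∈ Set.Icc (0:ℝ) 1 := by
  rcases eq_or_lt_of_le (Finset.sum_nonneg (fun j (_ : j ∈ A) => hnn j)) with h0 | hpos
  · have hz : π i.1 = 0 :=
      (Finset.sum_eq_zero_iff_of_nonneg (fun j _ => hnn j)).mp h0.symm i.1 i.2
    simp [hz]
  · constructor
    · exact div_nonneg (hnn i.1) (le_of_lt hpos)
    · rw [div_le_one hpos]
      exact Finset.single_le_sum (fun j (_ : j ∈ A) => hnn j) i.2

lemma exists_bound_g2 : ∃ M : ℝ, 0 ≤ M ∧ ∀ t ∈ Set.Icc (-1:ℝ) 2, |g t| ≤ M := by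
  obtain ⟨M, hM⟩ := (isCompact_Icc (a := (-1:ℝ)) (b := 2)).exists_bound_of_continuousOn
    continuous_g.continuousOn
  exact ⟨max M 0, le_max_right _ _, fun t ht =>
    le_trans (by simpa [Real.norm_eq_abs] using hM t ht) (le_max_left _ _)⟩

lemma scCondEnt_eq_mcCondEnt (P : K → K → ℝ) (π : K → ℝ) (A : Finset K) :
    scCondEnt P π A
      = mcCondEnt (stochComp P A) (fun i : {i : K // i ∈ A} => π i.1 / ∑ j ∈ A, π j) := rfl

lemma stochComp_mem_Icc_of_typical (P : K → K → ℝ) (π : K → ℝ) {A : Finset K}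
    {ε : ℝ} (hε1 : ε ≤ 1) {L : List {i : K // i ∈ A}}
    (hty : SMTypical (stochComp P A) (fun i : {i : K // i ∈ A} => π i.1 / ∑ j ∈ A, π j) ε L)
    (i j : {i : K // i ∈ A}) : stochComp P A i j ∈ Set.Icc (-1:ℝ) 2 := by
  obtain ⟨h1, -⟩ := hty i j
  have hr := ratio_mem L i j
  have habs := abs_lt.mp h1
  constructor
  · nlinarith [hr.1, hr.2]
  · nlinarith [hr.1, hr.2]

lemma abs_scCondEnt_le (P : K → K → ℝ) (π : K → ℝ) (hnn : ∀ i, 0 ≤ π i) {A : Finset K}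
    {M₂ : ℝ} (hM₂0 : 0 ≤ M₂) (hM₂ : ∀ t ∈ Set.Icc (-1:ℝ) 2, |g t| ≤ M₂)
    (hS : ∀ i j : {i : K // i ∈ A}, stochComp P A i j ∈ Set.Icc (-1:ℝ) 2) :
    |scCondEnt P π A| ≤ ((Fintype.card K : ℝ))^2 * M₂ := by
  rw [scCondEnt_eq_mcCondEnt, mcCondEnt_eq]
  calc |∑ p : {i : K // i ∈ A} × {i : K // i ∈ A},
          (π p.1.1 / ∑ l ∈ A, π l) * g (stochComp P A p.1 p.2)|
      ≤ ∑ p : {i : K // i ∈ A} × {i : K // i ∈ A},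
          |(π p.1.1 / ∑ l ∈ A, π l) * g (stochComp P A p.1 p.2)| :=
        Finset.abs_sum_le_sum_abs _ _
    _ ≤ ∑ _p : {i : K // i ∈ A} × {i : K // i ∈ A}, M₂ := by
        refine Finset.sum_le_sum fun p _ => ?_
        rw [abs_mul]
        have hq := piA_mem_Icc π hnn A p.1
        calc |π p.1.1 / ∑ l ∈ A, π l| * |g (stochComp P A p.1 p.2)|
            ≤ 1 * M₂ := by
              apply mul_le_mul _ (hM₂ _ (hS p.1 p.2)) (abs_nonneg _) zero_le_one
              rw [abs_of_nonneg hq.1]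
              exact hq.2
          _ = M₂ := one_mul _
    _ = ((Fintype.card {i : K // i ∈ A} : ℝ))^2 * M₂ := by
        rw [Finset.sum_const, Finset.card_univ, nsmul_eq_mul, Fintype.card_prod]
        push_cast
        ring
    _ ≤ ((Fintype.card K : ℝ))^2 * M₂ := by
        apply mul_le_mul_of_nonneg_right _ hM₂0
        have hle : Fintype.card {i : K // i ∈ A} ≤ Fintype.card K := by
          rw [Fintype.card_coe]
          exact Finset.card_le_univ A
        have h1 : (Fintype.card {i : K // i ∈ A} : ℝ) ≤ (Fintype.card K : ℝ) := by
          exact_mod_cast hle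
        have h2 : (0:ℝ) ≤ (Fintype.card {i : K // i ∈ A} : ℝ) := by positivity
        nlinarith

end PiA

lemma forall₂_ofFn {γ : Type*} {R : γ → γ → Prop} : ∀ {n : ℕ} (f h : Fin n → γ),
    (∀ i, R (f i) (h i)) → List.Forall₂ R (List.ofFn f) (List.ofFn h)
  | 0, f, h, _ => by
    rw [List.ofFn_zero, List.ofFn_zero]
    exact List.Forall₂.nil
  | (n+1), f, h, hR => by
    rw [List.ofFn_succ, List.ofFn_succ]
    exact List.Forall₂.cons (hR 0) (forall₂_ofFn _ _ (fun i => hR i.succ))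

section Ev

lemma eventually_const_poly_le_rpow (Cst : ℝ) (k : ℕ) {a : ℝ} (ha : 0 < a) :
    ∃ N : ℕ, ∀ n : ℕ, N ≤ n → Cst * ((n:ℝ)+1)^k ≤ (2:ℝ)^((n:ℝ)*a) := by
  have l2 : (0:ℝ) < Real.log 2 := Real.log_pos one_lt_two
  set c : ℝ := a * Real.log 2 / (2*(k+1)) with hc
  have hcpos : 0 < c := by positivity
  set C : ℝ := max Cst 1 with hCdef
  have hC1 : 1 ≤ C := le_max_right _ _
  have hC0 : 0 < C := lt_of_lt_of_le one_pos hC1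
  -- eventually |log t| < c * t
  have h1 : Filter.Tendsto (fun t : ℝ => (Real.log t)^1 / (c * t + 0)) Filter.atTop (nhds 0) :=
    Real.tendsto_pow_log_div_mul_add_atTop c 0 1 (ne_of_gt hcpos)
  have h2 : ∀ᶠ t : ℝ in Filter.atTop, |(Real.log t)^1 / (c * t + 0)| < 1 := by
    have h3 := Metric.tendsto_nhds.mp h1 1 one_pos
    filter_upwards [h3] with t ht
    rwa [Real.dist_eq, sub_zero] at ht
  obtain ⟨T, hT⟩ := Filter.eventually_atTop.mp h2
  obtain ⟨n₂, hn₂⟩ := exists_nat_gt (max T 1)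
  obtain ⟨n₃, hn₃⟩ := exists_nat_gt (Real.log C / c)
  refine ⟨n₂ + n₃, fun n hn => ?_⟩
  have hnn₂ : (n₂ : ℝ) ≤ (n : ℝ) := by exact_mod_cast le_trans (Nat.le_add_right _ _) hn
  have hnn₃ : (n₃ : ℝ) ≤ (n : ℝ) := by exact_mod_cast le_trans (Nat.le_add_left _ _) hn
  have hn1 : (1:ℝ) ≤ (n:ℝ) := le_trans (le_trans (le_max_right T 1) (le_of_lt hn₂)) hnn₂
  have hlogn : Real.log ((n:ℝ)+1) ≤ c * ((n:ℝ)+1) := by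
    have hTn : T ≤ (n:ℝ)+1 :=
      le_trans (le_trans (le_max_left T 1) (le_of_lt hn₂)) (by linarith)
    have := hT ((n:ℝ)+1) hTn
    rw [pow_one, add_zero] at this
    have hct : 0 < c * ((n:ℝ)+1) := by positivity
    rw [abs_div, abs_of_pos hct, div_lt_one hct] at this
    exact le_of_lt (lt_of_le_of_lt (le_abs_self _) this)
  have hlogC : Real.log C ≤ c * (n:ℝ) := by
    have : Real.log C / c < (n₃:ℝ) := hn₃
    rw [div_lt_iff₀ hcpos] at this
    calc Real.log C ≤ (n₃:ℝ) * c := le_of_lt this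
      _ ≤ (n:ℝ) * c := by nlinarith
      _ = c * (n:ℝ) := mul_comm _ _
  -- main estimate
  have hv0 : 0 < C * ((n:ℝ)+1)^k := by positivity
  have hlogv : Real.log (C * ((n:ℝ)+1)^k) ≤ (n:ℝ) * a * Real.log 2 := by
    rw [Real.log_mul (ne_of_gt hC0) (by positivity), Real.log_pow]
    have hk : (k:ℝ) * Real.log ((n:ℝ)+1) ≤ (k:ℝ) * (c * ((n:ℝ)+1)) :=
      mul_le_mul_of_nonneg_left hlogn (Nat.cast_nonneg k)
    have hn1' : (n:ℝ)+1 ≤ 2*(n:ℝ) := by linarith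
    have hkk : (k:ℝ) * (c * ((n:ℝ)+1)) ≤ (k:ℝ) * (c * (2*(n:ℝ))) := by
      apply mul_le_mul_of_nonneg_left _ (Nat.cast_nonneg k)
      nlinarith
    have hsum : Real.log C + (k:ℝ) * (c * (2*(n:ℝ))) ≤ (n:ℝ) * a * Real.log 2 := by
      have hceq : c * (2*((k:ℝ)+1)) = a * Real.log 2 := by
        rw [hc]
        field_simp
      calc Real.log C + (k:ℝ) * (c * (2*(n:ℝ)))
          ≤ c * (n:ℝ) + (k:ℝ) * (c * (2*(n:ℝ))) := by linarith
        _ ≤ (n:ℝ) * (c * (2*((k:ℝ)+1))) := by nlinarith [Nat.cast_nonneg (α := ℝ) k]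
        _ = (n:ℝ) * (a * Real.log 2) := by rw [hceq]
        _ = (n:ℝ) * a * Real.log 2 := by ring
    linarith
  have hfinal : C * ((n:ℝ)+1)^k ≤ (2:ℝ)^((n:ℝ)*a) := by
    rw [Real.rpow_def_of_pos two_pos]
    calc C * ((n:ℝ)+1)^k = Real.exp (Real.log (C * ((n:ℝ)+1)^k)) := (Real.exp_log hv0).symm
      _ ≤ Real.exp (Real.log 2 * ((n:ℝ)*a)) := by
          apply Real.exp_le_exp.mpr
          calc Real.log (C * ((n:ℝ)+1)^k) ≤ (n:ℝ) * a * Real.log 2 := hlogv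
            _ = Real.log 2 * ((n:ℝ)*a) := by ring
  calc Cst * ((n:ℝ)+1)^k ≤ C * ((n:ℝ)+1)^k := by
        apply mul_le_mul_of_nonneg_right (le_max_left _ _) (by positivity)
    _ ≤ (2:ℝ)^((n:ℝ)*a) := hfinal

end Ev

section SumCosets
variable {K : Type*} [Ring K] [Fintype K] [DecidableEq K] (I : Ideal K)

lemma sum_length_subListIn_le (l : List K) :
    ∑ A ∈ cosetsOf I, (subListIn l A).length ≤ l.length := by
  have hdisj : (↑(cosetsOf I) : Set (Finset K)).PairwiseDisjoint id := by
    intro A hA B hB hne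
    simp only [Finset.mem_coe] at hA hB
    rw [Function.onFun, Finset.disjoint_left]
    intro a haA haB
    exact hne (cosets_disjoint I hA hB haA haB)
  calc ∑ A ∈ cosetsOf I, (subListIn l A).length
      = ∑ A ∈ cosetsOf I, ∑ i ∈ A, l.count i :=
        Finset.sum_congr rfl fun A _ => length_subListIn l A
    _ = ∑ i ∈ (cosetsOf I).biUnion id, l.count i := (Finset.sum_biUnion hdisj).symm
    _ ≤ ∑ i : K, l.count i := Finset.sum_le_sum_of_subset (Finset.subset_univ _)
    _ = l.length := sum_count_univ l

end SumCosets
end Stmt6Aux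

set_option linter.unusedVariables false
set_option maxHeartbeats 8000000
open Stmt6Aux

/-- Typicality lemma: for a Supremus typical `x` and a left ideal `I`, the number of
Supremus typical `y` with `y - x ∈ Iⁿ` is less than `2^{n(H(S_{K/I}|π)+η)}`. -/
theorem stmt6 {K : Type*} [Ring K] [Fintype K] [DecidableEq K]
    (P : K → K → ℝ) (π : K → ℝ)
    (hP : IsStochasticMat P) (hirr : IsIrreducibleMat P) (hπ : IsInvariantDist P π) :
    ∀ η > (0 : ℝ), ∃ ε₀ > (0 : ℝ), ∃ N₀ : ℕ+, ∀ ε : ℝ, 0 < ε → ε < ε₀ →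
      ∀ n : ℕ, (N₀ : ℕ) < n →
      ∀ x : Fin n → K, SupTypical P π ε (List.ofFn x) →
      ∀ I : Ideal K,
        (Nat.card {y : Fin n → K // SupTypical P π ε (List.ofFn y) ∧
            ∀ l : Fin n, y l - x l ∈ I} : ℝ) <
          (2 : ℝ) ^ ((n : ℝ) * (ringHS P π I + η)) := by
  intro η hη
  set c := Fintype.card K with hcdef
  have hc : 0 < c := Fintype.card_pos
  have hcR : (1:ℝ) ≤ (c:ℝ) := by exact_mod_cast hc
  obtain ⟨M₂, hM₂0, hM₂⟩ := exists_bound_g2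
  set δ : ℝ := η/4 with hδdef
  have hδ : 0 < δ := by positivity
  have hcore : ∀ A : Finset K, ∃ e : ℝ, 0 < e ∧ (A.Nonempty → ∀ ε : ℝ, 0 < ε → ε < e → ∀ m : ℕ,
      ((Finset.univ.filter fun z : Fin m → {i : K // i ∈ A} =>
          SMTypical (stochComp P A) (fun i : {i : K // i ∈ A} => π i.1 / ∑ j ∈ A, π j) ε
            (List.ofFn z)).card : ℝ)
        ≤ (Fintype.card {i : K // i ∈ A} : ℝ)
            * ((m:ℝ)+1) ^ (Fintype.card {i : K // i ∈ A} ^ 2)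
            * (2:ℝ) ^ ((m:ℝ) * (mcCondEnt (stochComp P A)
                (fun i : {i : K // i ∈ A} => π i.1 / ∑ j ∈ A, π j) + δ))) := by
    intro A
    by_cases hA : A.Nonempty
    · haveI : Nonempty {i : K // i ∈ A} := ⟨⟨hA.choose, hA.choose_spec⟩⟩
      have hq : ∀ i : {i : K // i ∈ A},
          |(fun i : {i : K // i ∈ A} => π i.1 / ∑ j ∈ A, π j) i| ≤ 1 := by
        intro i
        have h := piA_mem_Icc π hπ.1 A i
        rw [abs_of_nonneg h.1]
        exact h.2
      obtain ⟨e, he, hb⟩ := core (stochComp P A) _ hq hδ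
      exact ⟨e, he, fun _ => hb⟩
    · exact ⟨1, one_pos, fun h => absurd h hA⟩
  choose eps heps hepsb using hcore
  set K₁ : ℝ := (c:ℝ)^4 * (M₂ + 1) with hK₁def
  have hK₁pos : 0 < K₁ := by positivity
  have hK₁M : (c:ℝ)^4 * M₂ ≤ K₁ := by nlinarith
  obtain ⟨N', hN'⟩ := eventually_const_poly_le_rpow ((c:ℝ)^c * (2:ℝ)^(K₁)) (c^3)
    (show (0:ℝ) < η/4 by positivity)
  refine ⟨min (min 1 (η / (4*K₁)))
      ((Finset.univ : Finset (Finset K)).inf' ⟨∅, Finset.mem_univ ∅⟩ eps), ?_,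
      ⟨N'+1, Nat.succ_pos _⟩, ?_⟩
  · apply lt_min
    · apply lt_min one_pos
      positivity
    · exact (Finset.lt_inf'_iff _).2 fun A _ => heps A
  intro ε hε hεlt n hn x hx I
  have hε1 : ε ≤ 1 :=
    le_of_lt (lt_of_lt_of_le hεlt (le_trans (min_le_left _ _) (min_le_left _ _)))
  have hεK₁ : ε ≤ η / (4*K₁) :=
    le_of_lt (lt_of_lt_of_le hεlt (le_trans (min_le_left _ _) (min_le_right _ _)))
  have hεA : ∀ A : Finset K, ε < eps A := fun A =>
    lt_of_lt_of_le hεlt (le_trans (min_le_right _ _) (Finset.inf'_le _ (Finset.mem_univ A)))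
  have hnN : N' + 1 < n := hn
  have hn1 : 1 ≤ n := by omega
  have hnR : (1:ℝ) ≤ (n:ℝ) := by exact_mod_cast hn1
  have hnpos : (0:ℝ) < (n:ℝ) := by linarith
  set l := List.ofFn x with hldef
  have hlen_l : l.length = n := List.length_ofFn
  -- count bounds per state
  have hcount : ∀ i : K, |(l.count i : ℝ) - (n:ℝ) * π i| ≤ (n:ℝ)*ε + 1 := by
    intro i
    have hun : (Finset.univ : Finset K).Nonempty := ⟨0, Finset.mem_univ 0⟩
    obtain ⟨-, h2⟩ := hx Finset.univ hun (eU i) (eU i)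
    rw [stateCount_subListIn_univ, length_subListIn_univ, hlen_l] at h2
    replace h2 : |(stateCount l i : ℝ)/(n:ℝ) - π i / ∑ j : K, π j| < ε := h2
    have hsum1 : π i / ∑ j ∈ Finset.univ, π j = π i := by rw [hπ.2.1, div_one]
    rw [hsum1] at h2
    have hstate : |(stateCount l i : ℝ) - (n:ℝ) * π i| ≤ (n:ℝ)*ε := by
      have hrw : (stateCount l i : ℝ) - (n:ℝ)*π i
          = ((stateCount l i : ℝ)/(n:ℝ) - π i) * (n:ℝ) := by
        field_simp
      rw [hrw, abs_mul, abs_of_pos hnpos, mul_comm ((n:ℝ)) ε]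
      exact mul_le_mul_of_nonneg_right (le_of_lt h2) (le_of_lt hnpos)
    have hcs := count_le_stateCount_add_one l i
    have c1 : (stateCount l i : ℝ) ≤ (l.count i : ℝ) := by exact_mod_cast hcs.2
    have c2 : (l.count i : ℝ) ≤ (stateCount l i : ℝ) + 1 := by exact_mod_cast hcs.1
    have habs := abs_le.mp hstate
    rw [abs_le]
    constructor <;> linarith
  -- length of coset-subsequences vs n π(A)
  have hmabs : ∀ A ∈ cosetsOf I,
      |((subListIn l A).length : ℝ) - (n:ℝ) * ∑ j ∈ A, π j| ≤ (c:ℝ)*((n:ℝ)*ε + 1) := by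
    intro A hA
    rw [length_subListIn l A]
    have hrw : ((∑ i ∈ A, l.count i : ℕ) : ℝ) - (n:ℝ) * ∑ j ∈ A, π j
        = ∑ i ∈ A, ((l.count i : ℝ) - (n:ℝ)*π i) := by
      rw [Finset.sum_sub_distrib, ← Finset.mul_sum]
      push_cast
      ring
    rw [hrw]
    calc |∑ i ∈ A, ((l.count i:ℝ) - (n:ℝ)*π i)|
        ≤ ∑ i ∈ A, |(l.count i:ℝ) - (n:ℝ)*π i| := Finset.abs_sum_le_sum_abs _ _
      _ ≤ ∑ _i ∈ A, ((n:ℝ)*ε + 1) := Finset.sum_le_sum fun i _ => hcount i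
      _ = (A.card : ℝ) * ((n:ℝ)*ε + 1) := by rw [Finset.sum_const, nsmul_eq_mul]
      _ ≤ (c:ℝ)*((n:ℝ)*ε + 1) := by
          apply mul_le_mul_of_nonneg_right _ (by positivity)
          exact_mod_cast Finset.card_le_univ A
  have hHA : ∀ A ∈ cosetsOf I, |scCondEnt P π A| ≤ (c:ℝ)^2 * M₂ := by
    intro A hA
    have hAne := cosetsOf_nonempty I hA
    exact abs_scCondEnt_le P π hπ.1 hM₂0 hM₂
      (stochComp_mem_Icc_of_typical P π hε1 (hx A hAne))
  -- the finite set
  classical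
  have hScard : (Nat.card {y : Fin n → K // SupTypical P π ε (List.ofFn y) ∧
        ∀ l' : Fin n, y l' - x l' ∈ I})
      = (Finset.univ.filter fun y : Fin n → K =>
          SupTypical P π ε (List.ofFn y) ∧ ∀ l' : Fin n, y l' - x l' ∈ I).card := by
    rw [Nat.card_eq_fintype_card]
    exact Fintype.card_subtype _
  set Sfin := Finset.univ.filter fun y : Fin n → K =>
      SupTypical P π ε (List.ofFn y) ∧ ∀ l' : Fin n, y l' - x l' ∈ I with hSfindef
  set G : (A : {A : Finset K // A ∈ cosetsOf I}) → Finset (List {i : K // i ∈ A.1}) :=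
    fun A => ((Finset.univ.filter
        fun z : Fin ((subListIn l A.1).length) → {i : K // i ∈ A.1} =>
          SMTypical (stochComp P A.1)
            (fun i : {i : K // i ∈ A.1} => π i.1 / ∑ j ∈ A.1, π j) ε (List.ofFn z)).image
      List.ofFn) with hGdef
  have hmaps : ∀ y ∈ Sfin,
      (fun A : {A : Finset K // A ∈ cosetsOf I} => subListIn (List.ofFn y) A.1)
        ∈ Fintype.piFinset G := by
    intro y hy
    rw [Fintype.mem_piFinset]
    intro A
    obtain ⟨-, hy1, hy2⟩ := Finset.mem_filter.mp hy
    have hAne := cosetsOf_nonempty I A.2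
    have hty := hy1 A.1 hAne
    have hf2 : List.Forall₂ (fun a b => a - b ∈ I) (List.ofFn y) l :=
      forall₂_ofFn y x (fun i => hy2 i)
    have hlen : (subListIn (List.ofFn y) A.1).length = (subListIn l A.1).length :=
      length_subListIn_eq_of_sub_mem I A.2 _ _ hf2
    obtain ⟨z, hz⟩ := exists_ofFn_of_length _ _ hlen
    exact Finset.mem_image.mpr ⟨z,
      Finset.mem_filter.mpr ⟨Finset.mem_univ _, by rwa [hz]⟩, hz⟩
  have hinj : ∀ y₁ ∈ Sfin, ∀ y₂ ∈ Sfin,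
      ((fun A : {A : Finset K // A ∈ cosetsOf I} => subListIn (List.ofFn y₁) A.1)
        = fun A : {A : Finset K // A ∈ cosetsOf I} => subListIn (List.ofFn y₂) A.1)
        → y₁ = y₂ := by
    intro y₁ h₁ y₂ h₂ h
    obtain ⟨-, h₁'⟩ := Finset.mem_filter.mp h₁
    obtain ⟨-, h₂'⟩ := Finset.mem_filter.mp h₂
    have hf2 : List.Forall₂ (fun a b => a - b ∈ I) (List.ofFn y₁) (List.ofFn y₂) :=
      forall₂_ofFn y₁ y₂ (fun i => by
        have h3 := I.sub_mem (h₁'.2 i) (h₂'.2 i)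
        simpa using h3)
    have heq := eq_of_subListIn_eq I (List.ofFn y₁) (List.ofFn y₂) hf2
      (fun A hA => congrFun h ⟨A, hA⟩)
    exact List.ofFn_injective heq
  have hcard1 : (Sfin.card : ℝ)
      ≤ ∏ A : {A : Finset K // A ∈ cosetsOf I}, ((G A).card : ℝ) := by
    have h1 : Sfin.card ≤ (Fintype.piFinset G).card :=
      Finset.card_le_card_of_injOn _ hmaps hinj
    rw [Fintype.card_piFinset G] at h1
    exact_mod_cast h1
  -- per-A bound
  have hGA : ∀ A : {A : Finset K // A ∈ cosetsOf I}, ((G A).card : ℝ)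
      ≤ (c:ℝ) * ((n:ℝ)+1)^(c^2)
        * (2:ℝ)^((((subListIn l A.1).length : ℕ) : ℝ) * (scCondEnt P π A.1 + δ)) := by
    intro A
    have hAne := cosetsOf_nonempty I A.2
    have h2 := hepsb A.1 hAne ε hε (hεA A.1) ((subListIn l A.1).length)
    have h1 : ((G A).card : ℝ) ≤ ((Finset.univ.filter
        fun z : Fin ((subListIn l A.1).length) → {i : K // i ∈ A.1} =>
          SMTypical (stochComp P A.1)
            (fun i : {i : K // i ∈ A.1} => π i.1 / ∑ j ∈ A.1, π j) ε
            (List.ofFn z)).card : ℝ) := by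
      exact_mod_cast Finset.card_image_le
    have hcA : Fintype.card {i : K // i ∈ A.1} ≤ c := by
      rw [Fintype.card_coe]
      exact Finset.card_le_univ A.1
    have hcAR : (Fintype.card {i : K // i ∈ A.1} : ℝ) ≤ (c:ℝ) := by exact_mod_cast hcA
    have hmn : (subListIn l A.1).length ≤ n := by
      rw [← hlen_l]
      exact length_subListIn_le l A.1
    have hmnR : (((subListIn l A.1).length : ℕ) : ℝ) ≤ (n:ℝ) := by exact_mod_cast hmn
    have hpow : ((((subListIn l A.1).length : ℕ):ℝ)+1)^(Fintype.card {i : K // i ∈ A.1} ^ 2)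
        ≤ ((n:ℝ)+1)^(c^2) := by
      calc ((((subListIn l A.1).length : ℕ):ℝ)+1)^(Fintype.card {i : K // i ∈ A.1} ^ 2)
          ≤ ((n:ℝ)+1)^(Fintype.card {i : K // i ∈ A.1} ^ 2) :=
            pow_le_pow_left₀ (by positivity) (by linarith) _
        _ ≤ ((n:ℝ)+1)^(c^2) :=
            pow_le_pow_right₀ (by linarith) (Nat.pow_le_pow_left hcA 2)
    rw [scCondEnt_eq_mcCondEnt]
    calc ((G A).card : ℝ) ≤ _ := h1
      _ ≤ _ := h2
      _ ≤ (c:ℝ) * ((n:ℝ)+1)^(c^2)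
          * (2:ℝ)^((((subListIn l A.1).length : ℕ) : ℝ) * (mcCondEnt (stochComp P A.1)
              (fun i : {i : K // i ∈ A.1} => π i.1 / ∑ j ∈ A.1, π j) + δ)) := by
        apply mul_le_mul_of_nonneg_right _ (by positivity)
        apply mul_le_mul hcAR hpow (by positivity) (by linarith)
  -- sum of lengths
  have hsum_m : ∑ A : {A : Finset K // A ∈ cosetsOf I},
      (((subListIn l A.1).length : ℕ) : ℝ) ≤ (n:ℝ) := by
    have h1 := sum_length_subListIn_le I l
    rw [hlen_l] at h1
    have h2 : ∑ A : {A : Finset K // A ∈ cosetsOf I}, (((subListIn l A.1).length : ℕ) : ℝ)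
        = ((∑ A ∈ cosetsOf I, (subListIn l A).length : ℕ) : ℝ) := by
      push_cast
      exact Finset.sum_coe_sort (cosetsOf I) (fun A => (((subListIn l A).length : ℕ) : ℝ))
    rw [h2]
    exact_mod_cast h1
  -- exponent bound
  have hexp : ∑ A : {A : Finset K // A ∈ cosetsOf I},
      (((subListIn l A.1).length : ℕ) : ℝ) * (scCondEnt P π A.1 + δ)
      ≤ (n:ℝ) * ringHS P π I + K₁*((n:ℝ)*ε+1) + (n:ℝ)*δ := by
    have hsplit : ∑ A : {A : Finset K // A ∈ cosetsOf I},
        (((subListIn l A.1).length : ℕ) : ℝ) * (scCondEnt P π A.1 + δ)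
        = (∑ A : {A : Finset K // A ∈ cosetsOf I},
            (((subListIn l A.1).length : ℕ) : ℝ) * scCondEnt P π A.1)
          + (∑ A : {A : Finset K // A ∈ cosetsOf I},
            (((subListIn l A.1).length : ℕ) : ℝ)) * δ := by
      rw [Finset.sum_mul, ← Finset.sum_add_distrib]
      exact Finset.sum_congr rfl fun A _ => by ring
    rw [hsplit]
    have hterm : ∀ A : {A : Finset K // A ∈ cosetsOf I},
        (((subListIn l A.1).length : ℕ) : ℝ) * scCondEnt P π A.1
        ≤ (n:ℝ) * ((∑ j ∈ A.1, π j) * scCondEnt P π A.1)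
            + ((c:ℝ)*((n:ℝ)*ε + 1)) * ((c:ℝ)^2 * M₂) := by
      intro A
      have h1 := hmabs A.1 A.2
      have h2 := hHA A.1 A.2
      have h3 : (((subListIn l A.1).length : ℕ) : ℝ) * scCondEnt P π A.1
          - (n:ℝ) * ((∑ j ∈ A.1, π j) * scCondEnt P π A.1)
          = ((((subListIn l A.1).length : ℕ) : ℝ) - (n:ℝ) * ∑ j ∈ A.1, π j)
            * scCondEnt P π A.1 := by ring
      have h4 : ((((subListIn l A.1).length : ℕ) : ℝ) - (n:ℝ) * ∑ j ∈ A.1, π j)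
          * scCondEnt P π A.1 ≤ ((c:ℝ)*((n:ℝ)*ε + 1)) * ((c:ℝ)^2 * M₂) := by
        calc ((((subListIn l A.1).length : ℕ) : ℝ) - (n:ℝ) * ∑ j ∈ A.1, π j)
              * scCondEnt P π A.1
            ≤ |((((subListIn l A.1).length : ℕ) : ℝ) - (n:ℝ) * ∑ j ∈ A.1, π j)
              * scCondEnt P π A.1| := le_abs_self _
          _ = |(((subListIn l A.1).length : ℕ) : ℝ) - (n:ℝ) * ∑ j ∈ A.1, π j|
              * |scCondEnt P π A.1| := abs_mul _ _
          _ ≤ ((c:ℝ)*((n:ℝ)*ε + 1)) * ((c:ℝ)^2 * M₂) := by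
              apply mul_le_mul h1 h2 (abs_nonneg _) _
              have h5 : (0:ℝ) ≤ (n:ℝ)*ε := by positivity
              positivity
      linarith [h3 ▸ h4]
    have hsum1 : ∑ A : {A : Finset K // A ∈ cosetsOf I},
        (((subListIn l A.1).length : ℕ) : ℝ) * scCondEnt P π A.1
        ≤ (n:ℝ) * ringHS P π I + K₁*((n:ℝ)*ε+1) := by
      calc ∑ A : {A : Finset K // A ∈ cosetsOf I},
            (((subListIn l A.1).length : ℕ) : ℝ) * scCondEnt P π A.1
          ≤ ∑ A : {A : Finset K // A ∈ cosetsOf I},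
            ((n:ℝ) * ((∑ j ∈ A.1, π j) * scCondEnt P π A.1)
              + ((c:ℝ)*((n:ℝ)*ε + 1)) * ((c:ℝ)^2 * M₂)) :=
            Finset.sum_le_sum fun A _ => hterm A
        _ = (n:ℝ) * (∑ A : {A : Finset K // A ∈ cosetsOf I},
              (∑ j ∈ A.1, π j) * scCondEnt P π A.1)
            + (Fintype.card {A : Finset K // A ∈ cosetsOf I} : ℝ)
              * (((c:ℝ)*((n:ℝ)*ε + 1)) * ((c:ℝ)^2 * M₂)) := by
            rw [Finset.sum_add_distrib, Finset.sum_const, ← Finset.mul_sum,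
              Finset.card_univ, nsmul_eq_mul]
        _ ≤ (n:ℝ) * ringHS P π I + K₁*((n:ℝ)*ε+1) := by
            have he1 : ∑ A : {A : Finset K // A ∈ cosetsOf I},
                (∑ j ∈ A.1, π j) * scCondEnt P π A.1 = ringHS P π I := by
              rw [ringHS]
              exact Finset.sum_coe_sort (cosetsOf I)
                (fun A => (∑ j ∈ A, π j) * scCondEnt P π A)
            rw [he1]
            have hcard : (Fintype.card {A : Finset K // A ∈ cosetsOf I} : ℝ) ≤ (c:ℝ) := by
              have := card_cosetsOf_le I
              have h7 : Fintype.card {A : Finset K // A ∈ cosetsOf I} = (cosetsOf I).card :=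
                Fintype.card_coe _
              rw [h7]
              exact_mod_cast this
            have hpos1 : (0:ℝ) ≤ ((n:ℝ)*ε + 1) := by positivity
            have h8 : (Fintype.card {A : Finset K // A ∈ cosetsOf I} : ℝ)
                * (((c:ℝ)*((n:ℝ)*ε + 1)) * ((c:ℝ)^2 * M₂))
                ≤ (c:ℝ) * (((c:ℝ)*((n:ℝ)*ε + 1)) * ((c:ℝ)^2 * M₂)) := by
              apply mul_le_mul_of_nonneg_right hcard
              positivity
            have h9 : (c:ℝ) * (((c:ℝ)*((n:ℝ)*ε + 1)) * ((c:ℝ)^2 * M₂))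
                = ((c:ℝ)^4 * M₂) * ((n:ℝ)*ε + 1) := by ring
            have h10 : ((c:ℝ)^4 * M₂) * ((n:ℝ)*ε + 1) ≤ K₁ * ((n:ℝ)*ε + 1) :=
              mul_le_mul_of_nonneg_right hK₁M hpos1
            linarith
    have hsum2 : (∑ A : {A : Finset K // A ∈ cosetsOf I},
        (((subListIn l A.1).length : ℕ) : ℝ)) * δ ≤ (n:ℝ) * δ :=
      mul_le_mul_of_nonneg_right hsum_m (le_of_lt hδ)
    linarith
  -- assemble
  have hprod : (Sfin.card : ℝ)
      ≤ ((c:ℝ) * ((n:ℝ)+1)^(c^2))^(Fintype.card {A : Finset K // A ∈ cosetsOf I})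
        * (2:ℝ)^(∑ A : {A : Finset K // A ∈ cosetsOf I},
            (((subListIn l A.1).length : ℕ) : ℝ) * (scCondEnt P π A.1 + δ)) := by
    calc (Sfin.card : ℝ) ≤ ∏ A : {A : Finset K // A ∈ cosetsOf I}, ((G A).card : ℝ) := hcard1
      _ ≤ ∏ A : {A : Finset K // A ∈ cosetsOf I},
          ((c:ℝ) * ((n:ℝ)+1)^(c^2)
            * (2:ℝ)^((((subListIn l A.1).length : ℕ) : ℝ) * (scCondEnt P π A.1 + δ))) :=
          Finset.prod_le_prod (fun A _ => by positivity) (fun A _ => hGA A)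
      _ = (∏ _A : {A : Finset K // A ∈ cosetsOf I}, ((c:ℝ) * ((n:ℝ)+1)^(c^2)))
          * ∏ A : {A : Finset K // A ∈ cosetsOf I},
            (2:ℝ)^((((subListIn l A.1).length : ℕ) : ℝ) * (scCondEnt P π A.1 + δ)) :=
          Finset.prod_mul_distrib
      _ = ((c:ℝ) * ((n:ℝ)+1)^(c^2))^(Fintype.card {A : Finset K // A ∈ cosetsOf I})
          * (2:ℝ)^(∑ A : {A : Finset K // A ∈ cosetsOf I},
              (((subListIn l A.1).length : ℕ) : ℝ) * (scCondEnt P π A.1 + δ)) := by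
          rw [Finset.prod_const, Finset.card_univ, rpow_finset_sum]
  have hbase1 : (1:ℝ) ≤ (c:ℝ) * ((n:ℝ)+1)^(c^2) := by
    have h1 : (1:ℝ) ≤ ((n:ℝ)+1)^(c^2) := one_le_pow₀ (by linarith)
    nlinarith
  have hcard2 : ((c:ℝ) * ((n:ℝ)+1)^(c^2))^(Fintype.card {A : Finset K // A ∈ cosetsOf I})
      ≤ ((c:ℝ) * ((n:ℝ)+1)^(c^2))^c := by
    apply pow_le_pow_right₀ hbase1
    have h7 : Fintype.card {A : Finset K // A ∈ cosetsOf I} = (cosetsOf I).card :=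
      Fintype.card_coe _
    rw [h7]
    exact card_cosetsOf_le I
  have hK1e : K₁*((n:ℝ)*ε+1) ≤ (n:ℝ)*(η/4) + K₁ := by
    have h1 : K₁ * ε ≤ η/4 := by
      calc K₁ * ε ≤ K₁ * (η/(4*K₁)) := mul_le_mul_of_nonneg_left hεK₁ (le_of_lt hK₁pos)
        _ = η/4 := by field_simp
    have h2 : K₁ * ((n:ℝ)*ε) ≤ (n:ℝ)*(η/4) := by
      calc K₁*((n:ℝ)*ε) = (n:ℝ)*(K₁*ε) := by ring
        _ ≤ (n:ℝ)*(η/4) := mul_le_mul_of_nonneg_left h1 (by positivity)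
    nlinarith
  have hexp2 : ∑ A : {A : Finset K // A ∈ cosetsOf I},
      (((subListIn l A.1).length : ℕ) : ℝ) * (scCondEnt P π A.1 + δ)
      ≤ (n:ℝ) * ringHS P π I + (n:ℝ)*(η/2) + K₁ := by
    have := hexp
    rw [hδdef] at this
    linarith [hK1e]
  have hpoly : ((c:ℝ) * ((n:ℝ)+1)^(c^2))^c * (2:ℝ)^(K₁) ≤ (2:ℝ)^((n:ℝ)*(η/4)) := by
    have hNn : N' ≤ n := le_of_lt (lt_trans (Nat.lt_succ_self N') hnN)
    have h1 := hN' n hNn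
    have hpp : (((n:ℝ)+1)^(c^2))^c = ((n:ℝ)+1)^(c^2*c) := (pow_mul _ _ _).symm
    have hc3 : c^2*c = c^3 := by ring
    calc ((c:ℝ) * ((n:ℝ)+1)^(c^2))^c * (2:ℝ)^(K₁)
        = (c:ℝ)^c * (2:ℝ)^(K₁) * (((n:ℝ)+1)^(c^2))^c := by rw [mul_pow]; ring
      _ = (c:ℝ)^c * (2:ℝ)^(K₁) * ((n:ℝ)+1)^(c^3) := by rw [hpp, hc3]
      _ ≤ (2:ℝ)^((n:ℝ)*(η/4)) := h1
  -- final chain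
  rw [hScard]
  have hfinal : ((Sfin.card : ℕ) : ℝ)
      < (2:ℝ) ^ ((n : ℝ) * (ringHS P π I + η)) := by
    calc ((Sfin.card : ℕ) : ℝ)
        ≤ ((c:ℝ) * ((n:ℝ)+1)^(c^2))^(Fintype.card {A : Finset K // A ∈ cosetsOf I})
          * (2:ℝ)^(∑ A : {A : Finset K // A ∈ cosetsOf I},
              (((subListIn l A.1).length : ℕ) : ℝ) * (scCondEnt P π A.1 + δ)) := hprod
      _ ≤ ((c:ℝ) * ((n:ℝ)+1)^(c^2))^c
          * (2:ℝ)^((n:ℝ) * ringHS P π I + (n:ℝ)*(η/2) + K₁) := by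
          apply mul_le_mul hcard2
            (Real.rpow_le_rpow_of_exponent_le one_le_two hexp2)
            (by positivity) (by positivity)
      _ = (((c:ℝ) * ((n:ℝ)+1)^(c^2))^c * (2:ℝ)^(K₁))
          * (2:ℝ)^((n:ℝ) * ringHS P π I + (n:ℝ)*(η/2)) := by
          rw [mul_assoc, ← Real.rpow_add two_pos]
          ring_nf
      _ ≤ (2:ℝ)^((n:ℝ)*(η/4)) * (2:ℝ)^((n:ℝ) * ringHS P π I + (n:ℝ)*(η/2)) := by
          apply mul_le_mul_of_nonneg_right hpoly (by positivity)
      _ = (2:ℝ)^((n:ℝ) * ringHS P π I + (n:ℝ)*(3*η/4)) := by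
          rw [← Real.rpow_add two_pos]
          ring_nf
      _ < (2:ℝ) ^ ((n : ℝ) * (ringHS P π I + η)) := by
          apply Real.rpow_lt_rpow_of_exponent_lt one_lt_two
          nlinarith
  exact hfinal
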